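/- arXiv:math/9204241 — 3 statements merged into one kernel-verified Lean document; each statement's English description precedes it below -/
import Mathlib

section
/- Let k ≥ 1 and d ≥ 1 be integers with k < 2d, and let A₁, A₂ ⊂ [0,1] be sets of exactly 2d points, each containing 0 and 1. Let f, g : [0,1] → [0,1] be increasing C^k diffeomorphisms with f(A₁) = A₂ and g(A₁) = A₂, and let M > 0 be such that sup_{x,y∈[0,1]} |D^k f(x) − D^k f(y)| < M and sup_{x,y∈[0,1]} |D^k g(x) − D^k g(y)| < M. Then for every integer t with 0 ≤ t ≤ k one has sup_{x∈[0,1]} |D^t f(x) − D^t g(x)| ≤ 2M. -/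
open Set Filter

noncomputable section

/-- The unit interval `[0,1] ⊆ ℝ`. -/
abbrev I01 : Set ℝ := Set.Icc (0:ℝ) 1

/-- `ψ` satisfies an `ε`-Hölder bound with constant `H` on `[0,1]`. -/
def HolderBoundOn01 (ε H : ℝ) (ψ : ℝ → ℝ) : Prop :=
  ∀ x ∈ I01, ∀ y ∈ I01, |ψ x - ψ y| ≤ H * |x - y| ^ ε

/-- A `C^{k+ε}` Cantor system on `[0,1]` with `d` branches: each branch `g i` is a
`C^k` increasing contraction of `[0,1]` with `ε`-Hölder `k`-th derivative, the images
`g i ([0,1])` are disjoint closed intervals in increasing order, `g 0 0 = 0` and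
`g (d-1) 1 = 1`. -/
structure IsCantorSystem {d : ℕ} (k : ℕ) (ε : ℝ) (g : Fin d → ℝ → ℝ) : Prop where
  maps : ∀ i, Set.MapsTo (g i) I01 I01
  smooth : ∀ i, ContDiffOn ℝ k (g i) I01
  holder : ∀ i, ∃ H > 0, HolderBoundOn01 ε H (iteratedDerivWithin k (g i) I01)
  deriv_pos : ∀ i, ∀ x ∈ I01, 0 < derivWithin (g i) I01 x
  deriv_lt_one : ∀ i, ∀ x ∈ I01, derivWithin (g i) I01 x < 1
  ordered : ∀ i j : Fin d, i < j → g i 1 < g j 0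
  first : ∀ i : Fin d, (i : ℕ) = 0 → g i 0 = 0
  last : ∀ i : Fin d, (i : ℕ) = d - 1 → g i 1 = 1

/-- For a finite word `w = [w₁,…,wₙ]`, `wordMap g w = g_{wₙ} ∘ ⋯ ∘ g_{w₁}` (i.e. `G_w`). -/
def wordMap {d : ℕ} (g : Fin d → ℝ → ℝ) : List (Fin d) → ℝ → ℝ
  | [] => id
  | i :: w => fun x => wordMap g w (g i x)

/-- `|I_w|`, the length of the interval `I_w = G_w([0,1]) = [G_w 0, G_w 1]`. -/
def wordLen {d : ℕ} (g : Fin d → ℝ → ℝ) (w : List (Fin d)) : ℝ :=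
  wordMap g w 1 - wordMap g w 0

/-- The scaling data of the word `w`: the first `d` coordinates are the ratios
`|I_{i·w}|/|I_w|`, the last `d-1` coordinates are the `d-1` gap lengths between the
consecutive children `I_{1·w},…,I_{d·w}` divided by `|I_w|`. -/
def scalingData {d : ℕ} (g : Fin d → ℝ → ℝ) (w : List (Fin d)) : Fin (2*d-1) → ℝ :=
  fun m =>
    if h : (m : ℕ) < d then
      wordLen g ((⟨(m : ℕ), h⟩ : Fin d) :: w) / wordLen g w
    else
      (wordMap g w (g ⟨(m : ℕ) - d + 1, by have := m.isLt; omega⟩ 0)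
        - wordMap g w (g ⟨(m : ℕ) - d, by have := m.isLt; omega⟩ 1)) / wordLen g w

/-- The open simplex `Simp_{2d-2} ⊆ (0,1)^{2d-1}` of vectors with coordinate sum `1`. -/
def Simp (d : ℕ) : Set (Fin (2*d-1) → ℝ) :=
  {s | (∀ m, s m ∈ Set.Ioo (0:ℝ) 1) ∧ ∑ m, s m = 1}

/-- The initial word `j|_n = (j_1,…,j_n)` of a sequence `j ∈ Σ_d^dual = {1,…,d}^ℕ`. -/
def dword {d : ℕ} (j : ℕ → Fin d) (n : ℕ) : List (Fin d) :=
  List.ofFn (fun i : Fin n => j i)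

/-- `S` is the scaling function of the system `g`:
`S(j) = lim_{n→∞} S_n(j|_n)` for every `j ∈ Σ_d^dual`. -/
def HasScalingFunction {d : ℕ} (g : Fin d → ℝ → ℝ) (S : (ℕ → Fin d) → Fin (2*d-1) → ℝ) : Prop :=
  ∀ j : ℕ → Fin d,
    Filter.Tendsto (fun n => scalingData g (dword j n)) Filter.atTop (nhds (S j))

/-- `ρ_S(j,j')` where `n = #(j∩j')`:
`ρ_S(j,j') = sup_w ∏_{t=1}^{n} S((j_{t+1},…,j_n)·w)_{j_t}` (depends only on `j` and `n`). -/
def rhoS {d : ℕ} (S : (ℕ → Fin d) → Fin (2*d-1) → ℝ) (j : ℕ → Fin d) (n : ℕ) : ℝ :=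
  ⨆ w : ℕ → Fin d, ∏ t ∈ Finset.range n,
    S (fun m => if t + 1 + m < n then j (t + 1 + m) else w (t + 1 + m - n))
      ⟨((j t) : ℕ), by have := (j t).isLt; omega⟩

/-- Given a scaling vector `s ∈ Simp_{2d-2}`, the partition of `[0,1]` it determines has
`i`-th child interval starting at `childLeft s i = ∑_{m<i} (s_m + s_{d+m})`. -/
def childLeft {d : ℕ} (s : Fin (2*d-1) → ℝ) (i : Fin d) : ℝ :=
  ∑ m ∈ (Finset.range (i : ℕ)).attach,
    (s ⟨(m : ℕ), by have h := Finset.mem_range.mp m.2; have := i.isLt; omega⟩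
      + s ⟨d + (m : ℕ), by have h := Finset.mem_range.mp m.2; have := i.isLt; omega⟩)

/-- The right endpoint of the `i`-th child interval of the partition determined by `s`. -/
def childRight {d : ℕ} (s : Fin (2*d-1) → ℝ) (i : Fin d) : ℝ :=
  childLeft s i + s ⟨(i : ℕ), by have := i.isLt; omega⟩

/-- `A(j)`: the set of `2d` endpoints of the `d` child intervals of the partition of `[0,1]`
determined by the scaling vector `s = S(j)`. -/
def Apts {d : ℕ} (s : Fin (2*d-1) → ℝ) : Set ℝ :=
  ⋃ i : Fin d, {childLeft s i, childRight s i}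

/-- An increasing `C^k` diffeomorphism of `[0,1]`. -/
structure IsDiffeo01 (k : ℕ) (φ : ℝ → ℝ) : Prop where
  smooth : ContDiffOn ℝ k φ I01
  mono : StrictMonoOn φ I01
  deriv_pos : ∀ x ∈ I01, 0 < derivWithin φ I01 x
  bij : Set.BijOn φ I01 I01

/-- `D^k(A₁,A₂)`: increasing `C^k` diffeomorphisms of `[0,1]` mapping `A₁` onto `A₂`. -/
def Dk (k : ℕ) (A₁ A₂ : Set ℝ) : Set (ℝ → ℝ) :=
  {φ | IsDiffeo01 k φ ∧ φ '' A₁ = A₂}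

/-- `D^k_var(M)(A₁,A₂)`: members of `D^k(A₁,A₂)` whose `k`-th derivative has variation `< M`. -/
def DkVar (k : ℕ) (M : ℝ) (A₁ A₂ : Set ℝ) : Set (ℝ → ℝ) :=
  {φ | φ ∈ Dk k A₁ A₂ ∧ ∀ x ∈ I01, ∀ y ∈ I01,
    |iteratedDerivWithin k φ I01 x - iteratedDerivWithin k φ I01 y| < M}

/-- The renormalization `(L')⁻¹ ∘ φ ∘ L` of `φ`, where `L, L'` are the increasing affine
bijections from `[0,1]` onto `[a,b]` and `[a',b']` respectively. -/
def renorm (a b a' b' : ℝ) (φ : ℝ → ℝ) : ℝ → ℝ :=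
  fun x => (φ (a + (b - a) * x) - a') / (b' - a')

/-- `R_{j₀} φ`: restrict `φ` to the `j₀`-th child interval of the partition determined by `s`
(mapped to the `j₀`-th child interval of the partition determined by `s'`) and renormalize. -/
def Rmap {d : ℕ} (s s' : Fin (2*d-1) → ℝ) (j₀ : Fin d) (φ : ℝ → ℝ) : ℝ → ℝ :=
  renorm (childLeft s j₀) (childRight s j₀) (childLeft s' j₀) (childRight s' j₀) φ

/-- `j₀·j = (j₀, j_1, j_2, …)`. -/
def consSeq {d : ℕ} (j₀ : Fin d) (j : ℕ → Fin d) : ℕ → Fin d :=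
  fun m => if m = 0 then j₀ else j (m - 1)

/-- The Cantor set of the system: `C = ⋂_{n ≥ 1} ⋃_{w of length n} I_w`. -/
def systemCantorSet {d : ℕ} (g : Fin d → ℝ → ℝ) : Set ℝ :=
  ⋂ n : ℕ, ⋃ w ∈ {w : List (Fin d) | w.length = n + 1}, wordMap g w '' I01

end
/-- If `f, g` are increasing `C^k` diffeomorphisms of `[0,1]` mapping a
`2d`-point set `A₁ ∋ 0,1` onto a `2d`-point set `A₂ ∋ 0,1` (with `k < 2d`), whose `k`-th
derivatives each have variation `< M`, then `sup |D^t f - D^t g| ≤ 2M` for all `0 ≤ t ≤ k`. -/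
theorem stmt0 (k d : ℕ) (hk : 1 ≤ k) (hd : 1 ≤ d) (hkd : k < 2*d)
    (A₁ A₂ : Set ℝ) (hA₁sub : A₁ ⊆ I01) (hA₂sub : A₂ ⊆ I01)
    (hA₁card : A₁.ncard = 2*d) (hA₂card : A₂.ncard = 2*d)
    (h0₁ : (0:ℝ) ∈ A₁) (h1₁ : (1:ℝ) ∈ A₁) (h0₂ : (0:ℝ) ∈ A₂) (h1₂ : (1:ℝ) ∈ A₂)
    (M : ℝ) (hM : 0 < M) (f g : ℝ → ℝ)
    (hf : f ∈ DkVar k M A₁ A₂) (hg : g ∈ DkVar k M A₁ A₂) :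
    ∀ t ≤ k, ∀ x ∈ I01,
      |iteratedDerivWithin t f I01 x - iteratedDerivWithin t g I01 x| ≤ 2 * M := by
  classical
  obtain ⟨⟨hfD, hfim⟩, hfvar⟩ := hf
  obtain ⟨⟨hgD, hgim⟩, hgvar⟩ := hg
  have hI : UniqueDiffOn ℝ I01 := uniqueDiffOn_Icc zero_lt_one
  have hfs : ContDiffOn ℝ k f I01 := hfD.smooth
  have hgs : ContDiffOn ℝ k g I01 := hgD.smooth
  have hhs : ContDiffOn ℝ k (f - g) I01 := hfs.sub hgs
  -- D^t (f-g) = D^t f - D^t g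
  have hsub : ∀ t ≤ k, ∀ x ∈ I01, iteratedDerivWithin t (f - g) I01 x
      = iteratedDerivWithin t f I01 x - iteratedDerivWithin t g I01 x := by
    intro t ht x hx
    exact iteratedDerivWithin_sub hx hI
      ((hfs.of_le (by exact_mod_cast ht)).contDiffWithinAt hx) ((hgs.of_le (by exact_mod_cast ht)).contDiffWithinAt hx)
  -- f = g on A₁
  have hA₁fin : A₁.Finite := Set.finite_of_ncard_ne_zero (by omega)
  have hA₂fin : A₂.Finite := Set.finite_of_ncard_ne_zero (by omega)
  have hc₁ : hA₁fin.toFinset.card = 2*d := by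
    rw [← Set.ncard_eq_toFinset_card _ hA₁fin]; exact hA₁card
  have hc₂ : hA₂fin.toFinset.card = 2*d := by
    rw [← Set.ncard_eq_toFinset_card _ hA₂fin]; exact hA₂card
  set e : Fin (2*d) ↪o ℝ := hA₁fin.toFinset.orderEmbOfFin hc₁ with he
  have heA₁ : ∀ i, e i ∈ A₁ := fun i => by
    have := hA₁fin.toFinset.orderEmbOfFin_mem hc₁ i
    rwa [Set.Finite.mem_toFinset] at this
  have heI : ∀ i, e i ∈ I01 := fun i => hA₁sub (heA₁ i)
  have hrange : ∀ a ∈ A₁, ∃ i, e i = a := by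
    intro a ha
    have : a ∈ Set.range (e : Fin (2*d) → ℝ) := by
      rw [Finset.range_orderEmbOfFin]
      simpa [Set.Finite.mem_toFinset] using ha
    exact this
  have keyuniq : ∀ (φ : ℝ → ℝ), StrictMonoOn φ I01 → φ '' A₁ = A₂ →
      (fun i => φ (e i)) = ⇑(hA₂fin.toFinset.orderEmbOfFin hc₂) := by
    intro φ hmono him
    refine Finset.orderEmbOfFin_unique hc₂ ?_ ?_
    · intro i
      rw [Set.Finite.mem_toFinset]
      rw [← him]
      exact Set.mem_image_of_mem φ (heA₁ i)
    · intro i j hij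
      exact hmono (heI i) (heI j) (e.strictMono hij)
  have hfg : ∀ a ∈ A₁, f a = g a := by
    intro a ha
    obtain ⟨i, rfl⟩ := hrange a ha
    have h1 := keyuniq f hfD.mono hfim
    have h2 := keyuniq g hgD.mono hgim
    have := congrFun (h1.trans h2.symm) i
    simpa using this
  -- zeros of D^t (f-g)
  have zeros : ∀ t ≤ k, ∃ x : ℕ → ℝ, (∀ i j, i < j → j < 2*d - t → x i < x j) ∧
      ∀ i < 2*d - t, x i ∈ I01 ∧ iteratedDerivWithin t (f - g) I01 (x i) = 0 := by
    intro t
    induction t with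
    | zero =>
      intro _
      refine ⟨fun i => e ⟨min i (2*d-1), by omega⟩, ?_, ?_⟩
      · intro i j hij hj
        exact e.strictMono (by simp only [Fin.mk_lt_mk]; omega)
      · intro i hi
        refine ⟨heI _, ?_⟩
        rw [iteratedDerivWithin_zero]
        have := hfg _ (heA₁ ⟨min i (2*d-1), by omega⟩)
        simp [this]
    | succ t ih =>
      intro ht
      obtain ⟨x, hxm, hx0⟩ := ih (Nat.le_of_succ_le ht)
      have hN : 2*d - (t+1) = (2*d - t) - 1 := by omega
      have hcont : ContinuousOn (iteratedDerivWithin t (f - g) I01) I01 :=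
        hhs.continuousOn_iteratedDerivWithin (by exact_mod_cast Nat.le_of_succ_le ht) hI
      have hdiff : DifferentiableOn ℝ (iteratedDerivWithin t (f - g) I01) I01 :=
        hhs.differentiableOn_iteratedDerivWithin (by exact_mod_cast ht) hI
      have hex : ∀ i : ℕ, ∃ c : ℝ, i < 2*d - (t+1) →
          x i < c ∧ c < x (i+1) ∧ c ∈ I01 ∧
            iteratedDerivWithin (t+1) (f - g) I01 c = 0 := by
        intro i
        by_cases hi : i < 2*d - (t+1)
        · have hiN : i < 2*d - t := by omega
          have hi1N : i + 1 < 2*d - t := by omega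
          have hab : x i < x (i+1) := hxm i (i+1) (Nat.lt_succ_self i) hi1N
          obtain ⟨haI, ha0⟩ := hx0 i hiN
          obtain ⟨hbI, hb0⟩ := hx0 (i+1) hi1N
          have hsubI : Set.Icc (x i) (x (i+1)) ⊆ I01 := Set.Icc_subset_Icc haI.1 hbI.2
          obtain ⟨c, hc, hc0⟩ := exists_deriv_eq_zero hab (hcont.mono hsubI)
            (by rw [ha0, hb0])
          have hcI : c ∈ I01 := ⟨le_of_lt (lt_of_le_of_lt haI.1 hc.1),
            le_of_lt (lt_of_lt_of_le hc.2 hbI.2)⟩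
          have hnhds : I01 ∈ nhds c := by
            refine Filter.mem_of_superset (isOpen_Ioo.mem_nhds
              (show c ∈ Set.Ioo (0:ℝ) 1 from
                ⟨lt_of_le_of_lt haI.1 hc.1, lt_of_lt_of_le hc.2 hbI.2⟩)) Set.Ioo_subset_Icc_self
          refine ⟨c, fun _ => ⟨hc.1, hc.2, hcI, ?_⟩⟩
          rw [iteratedDerivWithin_succ, derivWithin_of_mem_nhds hnhds]
          exact hc0
        · exact ⟨0, fun h => absurd h hi⟩
      choose c hc using hex
      have hxle : ∀ p q, p ≤ q → q < 2*d - t → x p ≤ x q := by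
        intro p q hpq hq
        rcases eq_or_lt_of_le hpq with rfl | hlt
        · exact le_refl _
        · exact le_of_lt (hxm p q hlt hq)
      refine ⟨c, ?_, fun i hi => ⟨(hc i hi).2.2.1, (hc i hi).2.2.2⟩⟩
      intro i j hij hj
      have hi : i < 2*d - (t+1) := lt_trans hij hj
      calc c i < x (i+1) := (hc i hi).2.1
        _ ≤ x j := hxle (i+1) j hij (by omega)
        _ < c j := (hc j hj).1
  -- main downward induction
  have key : ∀ j : ℕ, ∀ x ∈ I01,
      |iteratedDerivWithin (k - j) (f - g) I01 x| ≤ 2 * M := by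
    intro j
    induction j with
    | zero =>
      intro x hx
      simp only [Nat.sub_zero]
      obtain ⟨z, hzm, hz0⟩ := zeros k le_rfl
      obtain ⟨hzI, hz⟩ := hz0 0 (by omega)
      have : iteratedDerivWithin k (f - g) I01 x
          = iteratedDerivWithin k (f - g) I01 x - iteratedDerivWithin k (f - g) I01 (z 0) := by
        rw [hz, sub_zero]
      rw [this, hsub k le_rfl x hx, hsub k le_rfl (z 0) hzI]
      have h1 := hfvar x hx (z 0) hzI
      have h2 := hgvar x hx (z 0) hzI
      calc |iteratedDerivWithin k f I01 x - iteratedDerivWithin k g I01 x -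
            (iteratedDerivWithin k f I01 (z 0) - iteratedDerivWithin k g I01 (z 0))|
          = |(iteratedDerivWithin k f I01 x - iteratedDerivWithin k f I01 (z 0)) -
            (iteratedDerivWithin k g I01 x - iteratedDerivWithin k g I01 (z 0))| := by
            ring_nf
        _ ≤ |iteratedDerivWithin k f I01 x - iteratedDerivWithin k f I01 (z 0)| +
            |iteratedDerivWithin k g I01 x - iteratedDerivWithin k g I01 (z 0)| := abs_sub _ _
        _ ≤ 2 * M := by linarith
    | succ j ih =>
      intro x hx
      by_cases hj : j < k
      · set t := k - (j+1) with htdef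
        have htk : t < k := by omega
        have ht1 : t + 1 = k - j := by omega
        obtain ⟨z, hzm, hz0⟩ := zeros t (le_of_lt htk)
        obtain ⟨hzI, hz⟩ := hz0 0 (by omega)
        have hdiff : DifferentiableOn ℝ (iteratedDerivWithin t (f - g) I01) I01 :=
          hhs.differentiableOn_iteratedDerivWithin (by exact_mod_cast htk) hI
        have hbound : ∀ y ∈ I01, ‖derivWithin (iteratedDerivWithin t (f - g) I01) I01 y‖ ≤ 2*M := by
          intro y hy
          rw [← iteratedDerivWithin_succ, Real.norm_eq_abs, ht1]
          exact ih y hy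
        have := Convex.norm_image_sub_le_of_norm_derivWithin_le hdiff hbound
          (convex_Icc 0 1) hzI hx
        rw [Real.norm_eq_abs, Real.norm_eq_abs] at this
        have hxz : |x - z 0| ≤ 1 := by
          rw [abs_sub_le_iff]
          constructor <;> [linarith [hx.1, hx.2, hzI.1, hzI.2]; linarith [hx.1, hx.2, hzI.1, hzI.2]]
        calc |iteratedDerivWithin t (f - g) I01 x|
            = |iteratedDerivWithin t (f - g) I01 x - iteratedDerivWithin t (f - g) I01 (z 0)| := by
              rw [hz, sub_zero]
          _ ≤ 2*M * |x - z 0| := this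
          _ ≤ 2*M * 1 := by
              apply mul_le_mul_of_nonneg_left hxz (by linarith)
          _ = 2*M := mul_one _
      · have : k - (j+1) = k - j := by omega
        rw [this]; exact ih x hx
  intro t ht x hx
  have := key (k - t) x hx
  rw [show k - (k - t) = t by omega] at this
  rwa [hsub t ht x hx] at this
end

section
/- Let g_1,…,g_d be a C^{1+ε} Cantor system on [0,1]. Then there exist K > 0 and γ ∈ (0,1) such that for all finite words u of length n ≥ 1 and v of length m ≥ 1, |S_n(u) − S_m(v)|_∞ ≤ K γ^p, where p is the length of the longest common initial segment of u and v. -/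
open Set Filter

section Stmt2Aux

open Real Set

variable {d : ℕ}

/-- The derivative of `wordMap g w` within `[0,1]`, given by the chain rule. -/
noncomputable def wderiv (g : Fin d → ℝ → ℝ) : List (Fin d) → ℝ → ℝ
  | [] => fun _ => 1
  | i :: w => fun x => wderiv g w (g i x) * derivWithin (g i) I01 x

lemma wordMap_append (g : Fin d → ℝ → ℝ) (w t : List (Fin d)) (x : ℝ) :
    wordMap g (w ++ t) x = wordMap g t (wordMap g w x) := by
  induction w generalizing x with
  | nil => rfl
  | cons i w ih =>
    simp only [List.cons_append, wordMap]
    exact ih (g i x)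

variable {g : Fin d → ℝ → ℝ}

lemma mapsTo_wordMap (hm : ∀ i, Set.MapsTo (g i) I01 I01) :
    ∀ w : List (Fin d), Set.MapsTo (wordMap g w) I01 I01
  | [] => Set.mapsTo_id _
  | i :: w => (mapsTo_wordMap hm w).comp (hm i)

lemma hasDerivWithinAt_wordMap (hm : ∀ i, Set.MapsTo (g i) I01 I01)
    (hs : ∀ i, ContDiffOn ℝ 1 (g i) I01) :
    ∀ w : List (Fin d), ∀ x ∈ I01, HasDerivWithinAt (wordMap g w) (wderiv g w x) I01 x
  | [], x, _ => hasDerivWithinAt_id x I01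
  | i :: w, x, hx => by
    have h1 : HasDerivWithinAt (g i) (derivWithin (g i) I01 x) I01 x :=
      (((hs i).differentiableOn one_ne_zero) x hx).hasDerivWithinAt
    have h2 := hasDerivWithinAt_wordMap hm hs w (g i x) (hm i hx)
    exact h2.comp x h1 (hm i)

lemma wderiv_pos (hm : ∀ i, Set.MapsTo (g i) I01 I01)
    (hdp : ∀ i, ∀ x ∈ I01, 0 < derivWithin (g i) I01 x) :
    ∀ w : List (Fin d), ∀ x ∈ I01, 0 < wderiv g w x
  | [], _, _ => one_pos
  | i :: w, x, hx => mul_pos (wderiv_pos hm hdp w (g i x) (hm i hx)) (hdp i x hx)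

lemma wderiv_le {lam : ℝ} (hm : ∀ i, Set.MapsTo (g i) I01 I01)
    (hdp : ∀ i, ∀ x ∈ I01, 0 < derivWithin (g i) I01 x)
    (hle : ∀ i, ∀ x ∈ I01, derivWithin (g i) I01 x ≤ lam) (hlam0 : 0 ≤ lam) :
    ∀ w : List (Fin d), ∀ x ∈ I01, wderiv g w x ≤ lam ^ w.length
  | [], _, _ => by simp [wderiv]
  | i :: w, x, hx => by
    have h1 := wderiv_le hm hdp hle hlam0 w (g i x) (hm i hx)
    have h2 := hle i x hx
    have h3 := (hdp i x hx).le
    have h4 : (0:ℝ) ≤ lam ^ w.length := pow_nonneg hlam0 _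
    calc wderiv g w (g i x) * derivWithin (g i) I01 x
        ≤ lam ^ w.length * lam := mul_le_mul h1 h2 h3 h4
      _ = lam ^ (i :: w).length := by rw [List.length_cons, pow_succ]

lemma wordMap_mvt (hm : ∀ i, Set.MapsTo (g i) I01 I01)
    (hs : ∀ i, ContDiffOn ℝ 1 (g i) I01) (w : List (Fin d)) {x y : ℝ}
    (hx : x ∈ I01) (hy : y ∈ I01) (hxy : x < y) :
    ∃ ξ ∈ Set.Icc x y, wordMap g w y - wordMap g w x = wderiv g w ξ * (y - x) := by
  have hsub : Set.Icc x y ⊆ I01 := Set.Icc_subset_Icc hx.1 hy.2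
  have hcont : ContinuousOn (wordMap g w) (Set.Icc x y) := fun z hz =>
    ((hasDerivWithinAt_wordMap hm hs w z (hsub hz)).continuousWithinAt).mono hsub
  have hderiv : ∀ z ∈ Set.Ioo x y, HasDerivAt (wordMap g w) (wderiv g w z) z := by
    intro z hz
    have hz' : I01 ∈ nhds z :=
      Icc_mem_nhds (lt_of_le_of_lt hx.1 hz.1) (lt_of_lt_of_le hz.2 hy.2)
    exact (hasDerivWithinAt_wordMap hm hs w z (hsub (Set.Ioo_subset_Icc_self hz))).hasDerivAt hz'
  obtain ⟨c, hc, hceq⟩ := exists_hasDerivAt_eq_slope (wordMap g w) (wderiv g w) hxy hcont hderiv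
  refine ⟨c, Set.Ioo_subset_Icc_self hc, ?_⟩
  rw [hceq]
  exact (div_mul_cancel₀ _ (sub_ne_zero.mpr hxy.ne')).symm

lemma wordMap_mono (hm : ∀ i, Set.MapsTo (g i) I01 I01)
    (hs : ∀ i, ContDiffOn ℝ 1 (g i) I01)
    (hdp : ∀ i, ∀ x ∈ I01, 0 < derivWithin (g i) I01 x)
    (w : List (Fin d)) {x y : ℝ} (hx : x ∈ I01) (hy : y ∈ I01) (hxy : x ≤ y) :
    wordMap g w x ≤ wordMap g w y := by
  rcases eq_or_lt_of_le hxy with rfl | h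
  · exact le_rfl
  obtain ⟨ξ, hξ, he⟩ := wordMap_mvt hm hs w hx hy h
  have hp := wderiv_pos hm hdp w ξ (Set.Icc_subset_Icc hx.1 hy.2 hξ)
  nlinarith

lemma wordMap_strictMono (hm : ∀ i, Set.MapsTo (g i) I01 I01)
    (hs : ∀ i, ContDiffOn ℝ 1 (g i) I01)
    (hdp : ∀ i, ∀ x ∈ I01, 0 < derivWithin (g i) I01 x)
    (w : List (Fin d)) {x y : ℝ} (hx : x ∈ I01) (hy : y ∈ I01) (hxy : x < y) :
    wordMap g w x < wordMap g w y := by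
  obtain ⟨ξ, hξ, he⟩ := wordMap_mvt hm hs w hx hy hxy
  have hp := wderiv_pos hm hdp w ξ (Set.Icc_subset_Icc hx.1 hy.2 hξ)
  nlinarith

lemma wordMap_sub_le {lam : ℝ} (hm : ∀ i, Set.MapsTo (g i) I01 I01)
    (hs : ∀ i, ContDiffOn ℝ 1 (g i) I01)
    (hdp : ∀ i, ∀ x ∈ I01, 0 < derivWithin (g i) I01 x)
    (hle : ∀ i, ∀ x ∈ I01, derivWithin (g i) I01 x ≤ lam) (hlam0 : 0 ≤ lam)
    (w : List (Fin d)) {x y : ℝ} (hx : x ∈ I01) (hy : y ∈ I01) (hxy : x ≤ y) :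
    0 ≤ wordMap g w y - wordMap g w x ∧
      wordMap g w y - wordMap g w x ≤ lam ^ w.length * (y - x) := by
  rcases eq_or_lt_of_le hxy with rfl | h
  · simp
  obtain ⟨ξ, hξ, he⟩ := wordMap_mvt hm hs w hx hy h
  have hξI : ξ ∈ I01 := Set.Icc_subset_Icc hx.1 hy.2 hξ
  have h1 := wderiv_le hm hdp hle hlam0 w ξ hξI
  have h2 := (wderiv_pos hm hdp w ξ hξI).le
  constructor <;> nlinarith

lemma wordMap_lip {lam : ℝ} (hm : ∀ i, Set.MapsTo (g i) I01 I01)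
    (hs : ∀ i, ContDiffOn ℝ 1 (g i) I01)
    (hdp : ∀ i, ∀ x ∈ I01, 0 < derivWithin (g i) I01 x)
    (hle : ∀ i, ∀ x ∈ I01, derivWithin (g i) I01 x ≤ lam) (hlam0 : 0 ≤ lam)
    (w : List (Fin d)) {x y : ℝ} (hx : x ∈ I01) (hy : y ∈ I01) :
    |wordMap g w x - wordMap g w y| ≤ lam ^ w.length * |x - y| := by
  rcases le_total x y with h | h
  · obtain ⟨h1, h2⟩ := wordMap_sub_le hm hs hdp hle hlam0 w hx hy h
    rw [abs_of_nonpos (by linarith), abs_of_nonpos (by linarith)]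
    linarith
  · obtain ⟨h1, h2⟩ := wordMap_sub_le hm hs hdp hle hlam0 w hy hx h
    rw [abs_of_nonneg (by linarith), abs_of_nonneg (by linarith)]
    linarith

lemma wderiv_distortion {ε c H lam D : ℝ} (hεpos : 0 < ε)
    (hm : ∀ i, Set.MapsTo (g i) I01 I01)
    (hdp : ∀ i, ∀ x ∈ I01, 0 < derivWithin (g i) I01 x)
    (hc : 0 < c) (hcle : ∀ i, ∀ x ∈ I01, c ≤ derivWithin (g i) I01 x)
    (hH : 0 ≤ H)
    (hHol : ∀ i, ∀ x ∈ I01, ∀ y ∈ I01,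
      |derivWithin (g i) I01 x - derivWithin (g i) I01 y| ≤ H * |x - y| ^ ε)
    (hlip : ∀ i, ∀ x ∈ I01, ∀ y ∈ I01, |g i x - g i y| ≤ lam * |x - y|)
    (hlam0 : 0 ≤ lam)
    (hD : H / c + D * lam ^ ε ≤ D) (hD0 : 0 ≤ D) :
    ∀ w : List (Fin d), ∀ x ∈ I01, ∀ y ∈ I01,
      wderiv g w x ≤ wderiv g w y * Real.exp (D * |x - y| ^ ε)
  | [], x, hx, y, hy => by
    have : (0:ℝ) ≤ D * |x - y| ^ ε :=
      mul_nonneg hD0 (Real.rpow_nonneg (abs_nonneg _) _)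
    simpa [wderiv] using Real.one_le_exp this
  | i :: w, x, hx, y, hy => by
    set a : ℝ := |x - y| ^ ε with ha
    have ha0 : 0 ≤ a := Real.rpow_nonneg (abs_nonneg _) _
    -- per-letter bound
    have hdy := hdp i y hy
    have h1 : derivWithin (g i) I01 x ≤ derivWithin (g i) I01 y * Real.exp ((H / c) * a) := by
      have hb : derivWithin (g i) I01 x - derivWithin (g i) I01 y ≤ H * a :=
        (abs_le.mp (hHol i x hx y hy)).2 |>.trans_eq rfl
      have hcy := hcle i y hy
      have he := Real.add_one_le_exp ((H / c) * a)
      have hHca : 0 ≤ (H / c) * a := mul_nonneg (div_nonneg hH hc.le) ha0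
      have : derivWithin (g i) I01 y * (1 + (H / c) * a) ≥ derivWithin (g i) I01 y + H * a := by
        have : c * ((H / c) * a) = H * a := by field_simp
        nlinarith
      nlinarith [Real.exp_nonneg ((H / c) * a)]
    -- inner bound
    have hgx := hm i hx
    have hgy := hm i hy
    have h2 := wderiv_distortion hεpos hm hdp hc hcle hH hHol hlip hlam0 hD hD0 w (g i x) hgx (g i y) hgy
    have h3 : |g i x - g i y| ^ ε ≤ lam ^ ε * a := by
      calc |g i x - g i y| ^ ε ≤ (lam * |x - y|) ^ ε :=
            Real.rpow_le_rpow (abs_nonneg _) (hlip i x hx y hy) hεpos.le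
        _ = lam ^ ε * a := Real.mul_rpow hlam0 (abs_nonneg _)
    have h4 : wderiv g w (g i x) ≤ wderiv g w (g i y) * Real.exp (D * (lam ^ ε * a)) := by
      refine h2.trans (mul_le_mul_of_nonneg_left ?_ (wderiv_pos hm hdp w _ hgy).le)
      exact Real.exp_le_exp.mpr (mul_le_mul_of_nonneg_left h3 hD0)
    have hwx := (wderiv_pos hm hdp w (g i x) hgx).le
    have hdx := (hdp i x hx).le
    calc wderiv g w (g i x) * derivWithin (g i) I01 x
        ≤ (wderiv g w (g i y) * Real.exp (D * (lam ^ ε * a)))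
            * (derivWithin (g i) I01 y * Real.exp ((H / c) * a)) := by
          refine mul_le_mul h4 h1 hdx ?_
          exact mul_nonneg (wderiv_pos hm hdp w _ hgy).le (Real.exp_nonneg _)
      _ = (wderiv g w (g i y) * derivWithin (g i) I01 y)
            * Real.exp ((D * lam ^ ε + H / c) * a) := by
          rw [show (D * lam ^ ε + H / c) * a = D * (lam ^ ε * a) + H / c * a by ring,
            Real.exp_add]
          ring
      _ ≤ (wderiv g w (g i y) * derivWithin (g i) I01 y) * Real.exp (D * a) := by
          refine mul_le_mul_of_nonneg_left (Real.exp_le_exp.mpr ?_)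
            (mul_nonneg (wderiv_pos hm hdp w _ hgy).le hdy.le)
          have : D * lam ^ ε + H / c ≤ D := by linarith
          exact mul_le_mul_of_nonneg_right this ha0

end Stmt2Aux
section Stmt2Key

open Real Set

variable {d : ℕ} {g : Fin d → ℝ → ℝ}

lemma zero_mem_I01 : (0:ℝ) ∈ I01 := Set.left_mem_Icc.mpr zero_le_one
lemma one_mem_I01 : (1:ℝ) ∈ I01 := Set.right_mem_Icc.mpr zero_le_one

lemma key_estimate {ε lam D : ℝ} (hεpos : 0 < ε)
    (hm : ∀ i, Set.MapsTo (g i) I01 I01)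
    (hs : ∀ i, ContDiffOn ℝ 1 (g i) I01)
    (hdp : ∀ i, ∀ x ∈ I01, 0 < derivWithin (g i) I01 x)
    (hle : ∀ i, ∀ x ∈ I01, derivWithin (g i) I01 x ≤ lam) (hlam0 : 0 ≤ lam)
    (hdist : ∀ w : List (Fin d), ∀ x ∈ I01, ∀ y ∈ I01,
      wderiv g w x ≤ wderiv g w y * Real.exp (D * |x - y| ^ ε)) (hD0 : 0 ≤ D)
    (w t : List (Fin d)) {a b : ℝ} (ha : a ∈ I01) (hb : b ∈ I01) (hab : a < b) :
    |(wordMap g (w ++ t) b - wordMap g (w ++ t) a)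
        / (wordMap g (w ++ t) 1 - wordMap g (w ++ t) 0)
      - (wordMap g w b - wordMap g w a) / (wordMap g w 1 - wordMap g w 0)|
      ≤ D * Real.exp D * (lam ^ ε) ^ w.length := by
  set Z0 := wordMap g w 0 with hZ0def
  set Z1 := wordMap g w 1 with hZ1def
  set ZA := wordMap g w a with hZAdef
  set ZB := wordMap g w b with hZBdef
  have hZ0I : Z0 ∈ I01 := mapsTo_wordMap hm w zero_mem_I01
  have hZ1I : Z1 ∈ I01 := mapsTo_wordMap hm w one_mem_I01
  have hZAI : ZA ∈ I01 := mapsTo_wordMap hm w ha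
  have hZBI : ZB ∈ I01 := mapsTo_wordMap hm w hb
  have hZ01 : Z0 < Z1 := wordMap_strictMono hm hs hdp w zero_mem_I01 one_mem_I01 zero_lt_one
  have hZAB : ZA < ZB := wordMap_strictMono hm hs hdp w ha hb hab
  have h0A : Z0 ≤ ZA := wordMap_mono hm hs hdp w zero_mem_I01 ha ha.1
  have hB1 : ZB ≤ Z1 := wordMap_mono hm hs hdp w hb one_mem_I01 hb.2
  obtain ⟨ξ, hξ, hξe⟩ := wordMap_mvt hm hs t hZAI hZBI hZAB
  obtain ⟨η, hη, hηe⟩ := wordMap_mvt hm hs t hZ0I hZ1I hZ01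
  have hξI : ξ ∈ I01 := Set.Icc_subset_Icc hZAI.1 hZBI.2 hξ
  have hηI : η ∈ I01 := Set.Icc_subset_Icc hZ0I.1 hZ1I.2 hη
  set u := wderiv g t ξ with hudef
  set v := wderiv g t η with hvdef
  have hu0 : 0 < u := wderiv_pos hm hdp t ξ hξI
  have hv0 : 0 < v := wderiv_pos hm hdp t η hηI
  set δ := Z1 - Z0 with hδdef
  have hδ0 : 0 < δ := by linarith
  have hδle : δ ≤ lam ^ w.length := by
    have := wordMap_lip hm hs hdp hle hlam0 w one_mem_I01 zero_mem_I01
    rw [abs_of_pos (by linarith : (0:ℝ) < wordMap g w 1 - wordMap g w 0)] at this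
    simp only [hδdef, hZ1def, hZ0def]
    calc wordMap g w 1 - wordMap g w 0 ≤ lam ^ w.length * |1 - 0| := this
      _ = lam ^ w.length := by norm_num
  have hδ1 : δ ≤ 1 := by
    have := hZ1I.2; have := hZ0I.1; simp only [hδdef]; linarith
  have hξη : |ξ - η| ≤ δ := by
    rw [abs_le]
    constructor
    · have := hξ.1; have := hη.2; simp only [hδdef]; linarith
    · have := hξ.2; have := hη.1; simp only [hδdef]; linarith
  set x0 := D * δ ^ ε with hx0def
  have hδε0 : (0:ℝ) ≤ δ ^ ε := Real.rpow_nonneg hδ0.le _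
  have hx00 : 0 ≤ x0 := mul_nonneg hD0 hδε0
  have hxε : |ξ - η| ^ ε ≤ δ ^ ε := Real.rpow_le_rpow (abs_nonneg _) hξη hεpos.le
  have hru : u ≤ v * Real.exp x0 := by
    refine (hdist t ξ hξI η hηI).trans (mul_le_mul_of_nonneg_left ?_ hv0.le)
    exact Real.exp_le_exp.mpr (mul_le_mul_of_nonneg_left hxε hD0)
  have hrv : v ≤ u * Real.exp x0 := by
    refine (hdist t η hηI ξ hξI).trans (mul_le_mul_of_nonneg_left ?_ hu0.le)
    refine Real.exp_le_exp.mpr (mul_le_mul_of_nonneg_left ?_ hD0)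
    rwa [abs_sub_comm]
  set r := u / v with hrdef
  have hr1 : r ≤ Real.exp x0 := by
    rw [hrdef, div_le_iff₀ hv0]
    linarith [hru]
  have hr2 : Real.exp (-x0) ≤ r := by
    rw [hrdef, le_div_iff₀ hv0]
    have h := mul_le_mul_of_nonneg_right hrv (Real.exp_nonneg (-x0))
    rw [mul_assoc, ← Real.exp_add, add_neg_cancel, Real.exp_zero, mul_one] at h
    linarith [h]
  have habs : |r - 1| ≤ x0 * Real.exp x0 := by
    have e1 : (1 - x0) * Real.exp x0 ≤ 1 := by
      have h := Real.add_one_le_exp (-x0)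
      have h2 := mul_le_mul_of_nonneg_right h (Real.exp_nonneg x0)
      rwa [← Real.exp_add, neg_add_cancel, Real.exp_zero,
        show (-x0 + 1) * Real.exp x0 = (1 - x0) * Real.exp x0 by ring] at h2
    have e2 : 1 - Real.exp (-x0) ≤ x0 := by
      have h := Real.add_one_le_exp (-x0); linarith
    have e3 : (1:ℝ) ≤ Real.exp x0 := Real.one_le_exp hx00
    rw [abs_le]
    constructor
    · nlinarith
    · nlinarith
  -- rewrite the goal
  rw [wordMap_append g w t b, wordMap_append g w t a, wordMap_append g w t 1,
    wordMap_append g w t 0, ← hZAdef, ← hZBdef, ← hZ0def, ← hZ1def, hξe, hηe]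
  have hEeq : u * (ZB - ZA) / (v * (Z1 - Z0)) - (ZB - ZA) / (Z1 - Z0)
      = ((ZB - ZA) / δ) * (r - 1) := by
    rw [hrdef, hδdef]
    field_simp
  rw [hEeq, abs_mul]
  have hF1 : |(ZB - ZA) / δ| ≤ 1 := by
    rw [abs_of_pos (div_pos (by linarith) hδ0), div_le_one hδ0]
    simp only [hδdef]; linarith
  have hδεle : δ ^ ε ≤ (lam ^ ε) ^ w.length := by
    calc δ ^ ε ≤ (lam ^ w.length) ^ ε :=
          Real.rpow_le_rpow hδ0.le hδle hεpos.le
      _ = (lam ^ ε) ^ w.length := by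
          rw [← Real.rpow_natCast lam w.length, ← Real.rpow_natCast (lam ^ ε) w.length,
            ← Real.rpow_mul hlam0, ← Real.rpow_mul hlam0, mul_comm]
  have hδε1 : δ ^ ε ≤ 1 := Real.rpow_le_one hδ0.le hδ1 hεpos.le
  have hx0D : x0 ≤ D := by
    calc x0 = D * δ ^ ε := rfl
      _ ≤ D * 1 := mul_le_mul_of_nonneg_left hδε1 hD0
      _ = D := mul_one D
  have hexp : Real.exp x0 ≤ Real.exp D := Real.exp_le_exp.mpr hx0D
  calc |(ZB - ZA) / δ| * |r - 1| ≤ 1 * (x0 * Real.exp x0) :=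
        mul_le_mul hF1 habs (abs_nonneg _) one_pos.le
    _ = (D * δ ^ ε) * Real.exp x0 := by rw [one_mul]
    _ ≤ (D * ((lam ^ ε) ^ w.length)) * Real.exp D := by
        refine mul_le_mul (mul_le_mul_of_nonneg_left hδεle hD0) hexp
          (Real.exp_nonneg _) (mul_nonneg hD0 (pow_nonneg (Real.rpow_nonneg hlam0 _) _))
    _ = D * Real.exp D * (lam ^ ε) ^ w.length := by ring

end Stmt2Key
section Stmt2Final

open Real Set

variable {d : ℕ} {g : Fin d → ℝ → ℝ}

lemma scalingData_as_ratio (hm : ∀ i, Set.MapsTo (g i) I01 I01)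
    (hs : ∀ i, ContDiffOn ℝ 1 (g i) I01)
    (hdp : ∀ i, ∀ x ∈ I01, 0 < derivWithin (g i) I01 x)
    (hord : ∀ i j : Fin d, i < j → g i 1 < g j 0) (m : Fin (2*d-1)) :
    ∃ a b : ℝ, a ∈ I01 ∧ b ∈ I01 ∧ a < b ∧
      ∀ w : List (Fin d), scalingData g w m =
        (wordMap g w b - wordMap g w a) / (wordMap g w 1 - wordMap g w 0) := by
  by_cases h : (m : ℕ) < d
  · refine ⟨g ⟨(m : ℕ), h⟩ 0, g ⟨(m : ℕ), h⟩ 1, hm _ zero_mem_I01, hm _ one_mem_I01, ?_, ?_⟩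
    · have := wordMap_strictMono hm hs hdp [⟨(m : ℕ), h⟩] zero_mem_I01 one_mem_I01 zero_lt_one
      simpa [wordMap] using this
    · intro w
      simp only [scalingData, dif_pos h, wordLen, wordMap]
  · refine ⟨g ⟨(m : ℕ) - d, by have := m.isLt; omega⟩ 1,
      g ⟨(m : ℕ) - d + 1, by have := m.isLt; omega⟩ 0,
      hm _ one_mem_I01, hm _ zero_mem_I01, ?_, ?_⟩
    · exact hord _ _ (Fin.mk_lt_mk.mpr (by omega))
    · intro w
      simp only [scalingData, dif_neg h, wordLen]

end Stmt2Final
/-- for a `C^{1+ε}` Cantor system there are `K > 0` and `γ ∈ (0,1)` with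
`|S_n(u) - S_m(v)|_∞ ≤ K γ^p` for all nonempty finite words `u, v`, where `p` is the length
of their longest common initial segment. -/
theorem stmt2 (d : ℕ) (hd : 2 ≤ d) (ε : ℝ) (hε : ε ∈ Set.Ioc (0:ℝ) 1)
    (g : Fin d → ℝ → ℝ) (hg : IsCantorSystem 1 ε g) :
    ∃ K > 0, ∃ γ ∈ Set.Ioo (0:ℝ) 1,
      ∀ u v : List (Fin d), u ≠ [] → v ≠ [] →
        ∀ p : ℕ, p ≤ u.length → p ≤ v.length → u.take p = v.take p →
          (p < u.length → p < v.length → u[p]? ≠ v[p]?) →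
          ∀ m, |scalingData g u m - scalingData g v m| ≤ K * γ ^ p := by
  obtain ⟨hε0, hε1⟩ := hε
  have hm := hg.maps
  have hs1 : ∀ i, ContDiffOn ℝ 1 (g i) I01 := fun i => by
    have := hg.smooth i; exact_mod_cast this
  have hdp := hg.deriv_pos
  have huniq : UniqueDiffOn ℝ I01 := uniqueDiffOn_Icc zero_lt_one
  have hcont : ∀ i, ContinuousOn (derivWithin (g i) I01) I01 :=
    fun i => (hs1 i).continuousOn_derivWithin huniq le_rfl
  have hne : I01.Nonempty := ⟨0, zero_mem_I01⟩
  haveI hFinNe : Nonempty (Fin d) := ⟨⟨0, by omega⟩⟩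
  have i0 : Fin d := ⟨0, by omega⟩
  choose xmin hxminI hxmin using fun i => isCompact_Icc.exists_isMinOn hne (hcont i)
  choose xmax hxmaxI hxmax using fun i => isCompact_Icc.exists_isMaxOn hne (hcont i)
  set c := Finset.univ.inf' Finset.univ_nonempty
    (fun i => derivWithin (g i) I01 (xmin i)) with hcdef
  set lam := Finset.univ.sup' Finset.univ_nonempty
    (fun i => derivWithin (g i) I01 (xmax i)) with hlamdef
  have hc0 : 0 < c := Finset.lt_inf'_iff _ |>.mpr (fun i _ => hdp i _ (hxminI i))
  have hcle : ∀ i, ∀ x ∈ I01, c ≤ derivWithin (g i) I01 x := fun i x hx =>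
    (Finset.inf'_le _ (Finset.mem_univ i)).trans (hxmin i hx)
  have hlamle : ∀ i, ∀ x ∈ I01, derivWithin (g i) I01 x ≤ lam := fun i x hx =>
    (hxmax i hx).trans (Finset.le_sup' _ (Finset.mem_univ i))
  have hlam1 : lam < 1 := Finset.sup'_lt_iff _ |>.mpr
    (fun i _ => hg.deriv_lt_one i _ (hxmaxI i))
  have hlam0 : 0 < lam :=
    hc0.trans_le ((hcle i0 _ (hxminI i0)).trans (hlamle i0 _ (hxminI i0)))
  choose Hc hHc0 hHc using hg.holder
  set H := Finset.univ.sup' Finset.univ_nonempty Hc with hHdef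
  have hH0 : 0 < H := Finset.lt_sup'_iff _ |>.mpr ⟨i0, Finset.mem_univ i0, hHc0 i0⟩
  have hHol : ∀ i, ∀ x ∈ I01, ∀ y ∈ I01,
      |derivWithin (g i) I01 x - derivWithin (g i) I01 y| ≤ H * |x - y| ^ ε := by
    intro i x hx y hy
    have h := hHc i x hx y hy
    rw [show ((1:ℕ):ℕ) = 1 from rfl] at h
    rw [iteratedDerivWithin_one] at h
    exact h.trans (mul_le_mul_of_nonneg_right (Finset.le_sup' _ (Finset.mem_univ i))
      (Real.rpow_nonneg (abs_nonneg _) _))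
  have hlip : ∀ i, ∀ x ∈ I01, ∀ y ∈ I01, |g i x - g i y| ≤ lam * |x - y| := by
    intro i x hx y hy
    have := wordMap_lip hm hs1 hdp hlamle hlam0.le [i] hx hy
    simpa [wordMap] using this
  have hlamε1 : lam ^ ε < 1 := Real.rpow_lt_one hlam0.le hlam1 hε0
  have hlamε0 : 0 < lam ^ ε := Real.rpow_pos_of_pos hlam0 ε
  set D := (H / c) / (1 - lam ^ ε) with hDdef
  have hne1 : 1 - lam ^ ε ≠ 0 := by linarith
  have hD0 : 0 < D := div_pos (div_pos hH0 hc0) (by linarith)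
  have hDineq : H / c + D * lam ^ ε ≤ D := by
    have e : H / c = D - D * lam ^ ε := by
      rw [hDdef]; field_simp
    linarith
  have hdist := wderiv_distortion hε0 hm hdp hc0 hcle hH0.le hHol hlip hlam0.le hDineq hD0.le
  refine ⟨2 * (D * Real.exp D), by positivity, lam ^ ε, ⟨hlamε0, hlamε1⟩, ?_⟩
  intro u v hu hv p hpu hpv htake _ m
  obtain ⟨a, b, ha, hb, hab, hform⟩ := scalingData_as_ratio hm hs1 hdp hg.ordered m
  set w := u.take p with hw
  have hwlen : w.length = p := by rw [hw, List.length_take]; omega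
  have hu' : w ++ u.drop p = u := by rw [hw]; exact List.take_append_drop p u
  have hv' : w ++ v.drop p = v := by rw [htake]; exact List.take_append_drop p v
  have h1 := key_estimate hε0 hm hs1 hdp hlamle hlam0.le hdist hD0.le w (u.drop p) ha hb hab
  have h2 := key_estimate hε0 hm hs1 hdp hlamle hlam0.le hdist hD0.le w (v.drop p) ha hb hab
  rw [hu'] at h1
  rw [hv'] at h2
  rw [hwlen] at h1 h2
  rw [hform u, hform v]
  set Fu := (wordMap g u b - wordMap g u a) / (wordMap g u 1 - wordMap g u 0)
  set Fv := (wordMap g v b - wordMap g v a) / (wordMap g v 1 - wordMap g v 0)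
  set Fw := (wordMap g w b - wordMap g w a) / (wordMap g w 1 - wordMap g w 0)
  have htri : |Fu - Fv| ≤ |Fu - Fw| + |Fw - Fv| := abs_sub_le Fu Fw Fv
  have h2' : |Fw - Fv| ≤ D * Real.exp D * (lam ^ ε) ^ p := by rwa [abs_sub_comm]
  calc |Fu - Fv| ≤ |Fu - Fw| + |Fw - Fv| := htri
    _ ≤ D * Real.exp D * (lam ^ ε) ^ p + D * Real.exp D * (lam ^ ε) ^ p := by
        exact add_le_add h1 h2'
    _ = 2 * (D * Real.exp D) * (lam ^ ε) ^ p := by ring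
end

section
/- (Theorem 1, necessity.) Let g_1,…,g_d be a C^{1+ε} Cantor system on [0,1] with scaling function S. Then S is C^ε with respect to the metric ρ_S: there exists K > 0 such that for all j ≠ j' in Σ_d^dual, |S(j) − S(j')|_∞ ≤ K · ρ_S(j,j')^ε (when ε = 1 this is a Lipschitz condition). -/
open Set Filter

namespace Stmt9Aux

open Real

variable {d : ℕ} {ε : ℝ} {g : Fin d → ℝ → ℝ}

lemma wordMap_cons (g : Fin d → ℝ → ℝ) (a : Fin d) (w : List (Fin d)) (x : ℝ) :
    wordMap g (a :: w) x = wordMap g w (g a x) := rfl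

lemma wordMap_append (g : Fin d → ℝ → ℝ) (w v : List (Fin d)) (x : ℝ) :
    wordMap g (w ++ v) x = wordMap g v (wordMap g w x) := by
  induction w generalizing x with
  | nil => rfl
  | cons a w ih => exact ih (g a x)

lemma branch_hasDerivAt (hg : IsCantorSystem 1 ε g) (i : Fin d) {z : ℝ}
    (hz : z ∈ Set.Ioo (0:ℝ) 1) :
    HasDerivAt (g i) (derivWithin (g i) I01 z) z := by
  have hmem : I01 ∈ nhds z := Icc_mem_nhds hz.1 hz.2
  have hdiff : DifferentiableOn ℝ (g i) I01 :=
    (hg.smooth i).differentiableOn (by norm_num)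
  have h2 := (hdiff z (Set.Ioo_subset_Icc_self hz)).differentiableAt hmem
  rw [derivWithin_of_mem_nhds hmem]
  exact h2.hasDerivAt

lemma branch_strictMono (hg : IsCantorSystem 1 ε g) (i : Fin d) :
    StrictMonoOn (g i) I01 := by
  apply strictMonoOn_of_hasDerivWithinAt_pos (convex_Icc 0 1) (hg.smooth i).continuousOn
    (f' := fun z => derivWithin (g i) I01 z)
  · intro x hx
    rw [interior_Icc] at hx
    exact (branch_hasDerivAt hg i hx).hasDerivWithinAt
  · intro x hx
    rw [interior_Icc] at hx
    exact hg.deriv_pos i x (Set.Ioo_subset_Icc_self hx)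

lemma branch_mvt (hg : IsCantorSystem 1 ε g) (i : Fin d) {x y : ℝ}
    (hx : x ∈ I01) (hy : y ∈ I01) (hxy : x < y) :
    ∃ ξ ∈ Set.Ioo x y, g i y - g i x = derivWithin (g i) I01 ξ * (y - x) := by
  obtain ⟨c, hc, hc2⟩ := exists_hasDerivAt_eq_slope (g i) (fun z => derivWithin (g i) I01 z) hxy
    ((hg.smooth i).continuousOn.mono (Set.Icc_subset_Icc hx.1 hy.2))
    (fun z hz => branch_hasDerivAt hg i ⟨lt_of_le_of_lt hx.1 hz.1, lt_of_lt_of_le hz.2 hy.2⟩)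
  refine ⟨c, hc, ?_⟩
  rw [hc2, div_mul_cancel₀ _ (sub_ne_zero.mpr hxy.ne')]

lemma wordMap_mapsTo (hg : IsCantorSystem 1 ε g) :
    ∀ w : List (Fin d), Set.MapsTo (wordMap g w) I01 I01 := by
  intro w
  induction w with
  | nil => exact fun x hx => hx
  | cons a w ih => exact fun x hx => ih (hg.maps a hx)

lemma wordMap_strictMono (hg : IsCantorSystem 1 ε g) :
    ∀ w : List (Fin d), StrictMonoOn (wordMap g w) I01 := by
  intro w
  induction w with
  | nil => exact fun x _ y _ h => h
  | cons a w ih =>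
    exact fun x hx y hy h =>
      ih (hg.maps a hx) (hg.maps a hy) (branch_strictMono hg a hx hy h)

lemma wordLen_pos (hg : IsCantorSystem 1 ε g) (w : List (Fin d)) : 0 < wordLen g w :=
  sub_pos.mpr (wordMap_strictMono hg w (by norm_num [I01]) (by norm_num [I01]) one_pos)

lemma wordLen_le_one (hg : IsCantorSystem 1 ε g) (w : List (Fin d)) : wordLen g w ≤ 1 := by
  have h0 := wordMap_mapsTo hg w (x := 0) (by norm_num [I01])
  have h1 := wordMap_mapsTo hg w (x := 1) (by norm_num [I01])
  simp only [I01, Set.mem_Icc] at h0 h1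
  unfold wordLen; linarith [h0.1, h1.2]

end Stmt9Aux
namespace Stmt9Aux

variable {d : ℕ} {ε : ℝ} {g : Fin d → ℝ → ℝ}

lemma exists_bounds (hg : IsCantorSystem 1 ε g) (hd : 2 ≤ d) :
    ∃ lam Lam H : ℝ, 0 < lam ∧ lam ≤ Lam ∧ Lam < 1 ∧ 0 < H ∧
      (∀ i, ∀ x ∈ I01, lam ≤ derivWithin (g i) I01 x ∧ derivWithin (g i) I01 x ≤ Lam) ∧
      (∀ i, ∀ x ∈ I01, ∀ y ∈ I01,
        |derivWithin (g i) I01 x - derivWithin (g i) I01 y| ≤ H * |x - y| ^ ε) := by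
  have hne : Nonempty (Fin d) := ⟨⟨0, by omega⟩⟩
  have hI : (I01 : Set ℝ).Nonempty := Set.nonempty_Icc.mpr zero_le_one
  have hcont : ∀ i : Fin d, ContinuousOn (derivWithin (g i) I01) I01 := fun i =>
    (hg.smooth i).continuousOn_derivWithin uniqueDiffOn_Icc_zero_one (by exact_mod_cast le_rfl)
  have hmin : ∀ i : Fin d, ∃ x ∈ I01, ∀ y ∈ I01,
      derivWithin (g i) I01 x ≤ derivWithin (g i) I01 y := fun i =>
    by obtain ⟨x, hx, h⟩ := isCompact_Icc.exists_isMinOn hI (hcont i)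
       exact ⟨x, hx, fun y hy => h hy⟩
  have hmax : ∀ i : Fin d, ∃ x ∈ I01, ∀ y ∈ I01,
      derivWithin (g i) I01 y ≤ derivWithin (g i) I01 x := fun i =>
    by obtain ⟨x, hx, h⟩ := isCompact_Icc.exists_isMaxOn hI (hcont i)
       exact ⟨x, hx, fun y hy => h hy⟩
  choose xmin hxmin hmin using hmin
  choose xmax hxmax hmax using hmax
  choose Hc hHcpos hHc using hg.holder
  have hHc' : ∀ i, ∀ x ∈ I01, ∀ y ∈ I01,
      |derivWithin (g i) I01 x - derivWithin (g i) I01 y| ≤ Hc i * |x - y| ^ ε := by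
    intro i x hx y hy
    have := hHc i x hx y hy
    rwa [iteratedDerivWithin_one] at this
  have hune : (Finset.univ : Finset (Fin d)).Nonempty := Finset.univ_nonempty
  refine ⟨Finset.univ.inf' hune (fun i => derivWithin (g i) I01 (xmin i)),
    Finset.univ.sup' hune (fun i => derivWithin (g i) I01 (xmax i)),
    Finset.univ.sup' hune Hc, ?_, ?_, ?_, ?_, ?_, ?_⟩
  · rw [Finset.lt_inf'_iff]
    exact fun i _ => hg.deriv_pos i (xmin i) (hxmin i)
  · obtain ⟨i⟩ := hne
    calc Finset.univ.inf' hune (fun i => derivWithin (g i) I01 (xmin i))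
        ≤ derivWithin (g i) I01 (xmax i) :=
          le_trans (Finset.inf'_le _ (Finset.mem_univ i)) (hmin i _ (hxmax i))
      _ ≤ _ := Finset.le_sup' (f := fun i => derivWithin (g i) I01 (xmax i)) (Finset.mem_univ i)
  · rw [Finset.sup'_lt_iff]
    exact fun i _ => hg.deriv_lt_one i (xmax i) (hxmax i)
  · rw [Finset.lt_sup'_iff]
    obtain ⟨i⟩ := hne
    exact ⟨i, Finset.mem_univ i, hHcpos i⟩
  · intro i x hx
    constructor
    · exact le_trans (Finset.inf'_le _ (Finset.mem_univ i)) (hmin i x hx)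
    · exact le_trans (hmax i x hx) (Finset.le_sup' (f := fun i => derivWithin (g i) I01 (xmax i)) (Finset.mem_univ i))
  · intro i x hx y hy
    refine le_trans (hHc' i x hx y hy) ?_
    have : (0:ℝ) ≤ |x - y| ^ ε := Real.rpow_nonneg (abs_nonneg _) ε
    exact mul_le_mul_of_nonneg_right (Finset.le_sup' _ (Finset.mem_univ i)) this

end Stmt9Aux
namespace Stmt9Aux

variable {d : ℕ} {ε : ℝ} {g : Fin d → ℝ → ℝ}

lemma slope_le (hg : IsCantorSystem 1 ε g) (hε : ε ∈ Set.Ioc (0:ℝ) 1)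
    {lam Lam H : ℝ} (hlam : 0 < lam) (hLam1 : Lam < 1) (hlamLam : lam ≤ Lam) (hH : 0 < H)
    (hb : ∀ i, ∀ x ∈ I01, lam ≤ derivWithin (g i) I01 x ∧ derivWithin (g i) I01 x ≤ Lam)
    (hhol : ∀ i, ∀ x ∈ I01, ∀ y ∈ I01,
      |derivWithin (g i) I01 x - derivWithin (g i) I01 y| ≤ H * |x - y| ^ ε) :
    ∀ (v : List (Fin d)) {A B x y x' y' : ℝ}, A ∈ I01 → B ∈ I01 →
      A ≤ x → x < y → y ≤ B → A ≤ x' → x' < y' → y' ≤ B →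
      (wordMap g v y - wordMap g v x) / (y - x) ≤
        Real.exp (H / lam / (1 - Lam ^ ε) * (B - A) ^ ε) *
          ((wordMap g v y' - wordMap g v x') / (y' - x')) := by
  have hLam0 : 0 < Lam := lt_of_lt_of_le hlam hlamLam
  have hLamε : Lam ^ ε < 1 := Real.rpow_lt_one hLam0.le hLam1 hε.1
  have hLamε0 : 0 < 1 - Lam ^ ε := by linarith
  set C2 : ℝ := H / lam / (1 - Lam ^ ε) with hC2def
  have hC2 : 0 < C2 := by positivity
  intro v
  induction v with
  | nil =>
    intro A B x y x' y' hA hB hAx hxy hyB hAx' hxy' hy'B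
    have hBA : (0:ℝ) ≤ B - A := by linarith
    have h1 : (0:ℝ) ≤ C2 * (B - A) ^ ε := by positivity
    simp only [wordMap]
    rw [id, id, id, id, div_self (sub_ne_zero.mpr hxy.ne'),
      div_self (sub_ne_zero.mpr hxy'.ne'), mul_one]
    exact Real.one_le_exp h1
  | cons a v ih =>
    intro A B x y x' y' hA hB hAx hxy hyB hAx' hxy' hy'B
    have hx01 : x ∈ I01 := ⟨hA.1.trans hAx, (hxy.le.trans hyB).trans hB.2⟩
    have hy01 : y ∈ I01 := ⟨hx01.1.trans hxy.le, hyB.trans hB.2⟩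
    have hx'01 : x' ∈ I01 := ⟨hA.1.trans hAx', (hxy'.le.trans hy'B).trans hB.2⟩
    have hy'01 : y' ∈ I01 := ⟨hx'01.1.trans hxy'.le, hy'B.trans hB.2⟩
    have hAB : A < B := lt_of_le_of_lt hAx (hxy.trans_le hyB)
    obtain ⟨ξ, hξmem, hξeq⟩ := branch_mvt hg a hx01 hy01 hxy
    obtain ⟨ξ', hξ'mem, hξ'eq⟩ := branch_mvt hg a hx'01 hy'01 hxy'
    obtain ⟨η, hηmem, hηeq⟩ := branch_mvt hg a hA hB hAB
    have hξ01 : ξ ∈ I01 := ⟨hx01.1.trans hξmem.1.le, hξmem.2.le.trans hy01.2⟩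
    have hξ'01 : ξ' ∈ I01 := ⟨hx'01.1.trans hξ'mem.1.le, hξ'mem.2.le.trans hy'01.2⟩
    have hη01 : η ∈ I01 := ⟨hA.1.trans hηmem.1.le, hηmem.2.le.trans hB.2⟩
    have hmono := (branch_strictMono hg a).monotoneOn
    have hgax : g a x ∈ I01 := hg.maps a hx01
    have hgay : g a y ∈ I01 := hg.maps a hy01
    have hgax' : g a x' ∈ I01 := hg.maps a hx'01
    have hgay' : g a y' ∈ I01 := hg.maps a hy'01
    have hgaA : g a A ∈ I01 := hg.maps a hA
    have hgaB : g a B ∈ I01 := hg.maps a hB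
    have hgxy : g a x < g a y := branch_strictMono hg a hx01 hy01 hxy
    have hgxy' : g a x' < g a y' := branch_strictMono hg a hx'01 hy'01 hxy'
    have hIH := ih hgaA hgaB (hmono hA hx01 hAx) hgxy (hmono hy01 hB hyB)
      (hmono hA hx'01 hAx') hgxy' (hmono hy'01 hB hy'B)
    -- derivative bounds
    have hDξ := hb a ξ hξ01
    have hDξ' := hb a ξ' hξ'01
    have hDη := hb a η hη01
    have hBA0 : (0:ℝ) ≤ B - A := by linarith
    have hrpBA : (0:ℝ) ≤ (B - A) ^ ε := Real.rpow_nonneg hBA0 ε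
    -- step bound for the derivative ratio
    have habs : |ξ - ξ'| ≤ B - A := by
      rw [abs_le]
      constructor <;> nlinarith [hξmem.1, hξmem.2, hξ'mem.1, hξ'mem.2]
    have hrp : |ξ - ξ'| ^ ε ≤ (B - A) ^ ε :=
      Real.rpow_le_rpow (abs_nonneg _) habs hε.1.le
    have hstep : derivWithin (g a) I01 ξ ≤
        derivWithin (g a) I01 ξ' * Real.exp (H / lam * (B - A) ^ ε) := by
      have h1 : derivWithin (g a) I01 ξ ≤ derivWithin (g a) I01 ξ' + H * (B - A) ^ ε := by
        have h2 := (abs_le.mp (hhol a ξ hξ01 ξ' hξ'01)).2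
        have h3 : H * |ξ - ξ'| ^ ε ≤ H * (B - A) ^ ε :=
          mul_le_mul_of_nonneg_left hrp hH.le
        linarith
      have key : H * (B - A) ^ ε ≤ derivWithin (g a) I01 ξ' * (H / lam * (B - A) ^ ε) := by
        have h4 : derivWithin (g a) I01 ξ' * (H / lam * (B - A) ^ ε)
            = (derivWithin (g a) I01 ξ' / lam) * (H * (B - A) ^ ε) := by
          field_simp
        have h5 : (1:ℝ) ≤ derivWithin (g a) I01 ξ' / lam :=
          (one_le_div hlam).mpr hDξ'.1
        rw [h4]
        calc H * (B - A) ^ ε = 1 * (H * (B - A) ^ ε) := (one_mul _).symm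
          _ ≤ (derivWithin (g a) I01 ξ' / lam) * (H * (B - A) ^ ε) :=
              mul_le_mul_of_nonneg_right h5 (mul_nonneg hH.le hrpBA)
      have h6 : 1 + H / lam * (B - A) ^ ε ≤ Real.exp (H / lam * (B - A) ^ ε) := by
        linarith [Real.add_one_le_exp (H / lam * (B - A) ^ ε)]
      have h7 : (0:ℝ) < derivWithin (g a) I01 ξ' := lt_of_lt_of_le hlam hDξ'.1
      have h8 : derivWithin (g a) I01 ξ
          ≤ derivWithin (g a) I01 ξ' * (1 + H / lam * (B - A) ^ ε) := by
        have hx : derivWithin (g a) I01 ξ' * (1 + H / lam * (B - A) ^ ε)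
            = derivWithin (g a) I01 ξ' + derivWithin (g a) I01 ξ' * (H / lam * (B - A) ^ ε) := by
          ring
        linarith
      exact h8.trans (mul_le_mul_of_nonneg_left h6 h7.le)
    -- contraction of [A,B]
    have hcontr : g a B - g a A ≤ Lam * (B - A) := by
      rw [hηeq]
      exact mul_le_mul_of_nonneg_right hDη.2 hBA0
    have hBA' : (g a B - g a A) ^ ε ≤ Lam ^ ε * (B - A) ^ ε := by
      calc (g a B - g a A) ^ ε ≤ (Lam * (B - A)) ^ ε :=
            Real.rpow_le_rpow (by linarith [hmono hA hB hAB.le]) hcontr hε.1.le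
        _ = Lam ^ ε * (B - A) ^ ε := Real.mul_rpow hLam0.le hBA0
    have hexp : Real.exp (C2 * (g a B - g a A) ^ ε) * Real.exp (H / lam * (B - A) ^ ε)
        ≤ Real.exp (C2 * (B - A) ^ ε) := by
      rw [← Real.exp_add]
      apply Real.exp_le_exp.mpr
      have h8 : C2 * (g a B - g a A) ^ ε ≤ C2 * (Lam ^ ε * (B - A) ^ ε) :=
        mul_le_mul_of_nonneg_left hBA' hC2.le
      have heq : C2 * (Lam ^ ε * (B - A) ^ ε) + H / lam * (B - A) ^ ε
          = C2 * (B - A) ^ ε := by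
        rw [hC2def]
        field_simp
        ring
      linarith
    -- slope decompositions
    have hne1 : y - x ≠ 0 := sub_ne_zero.mpr hxy.ne'
    have hne2 : g a y - g a x ≠ 0 := sub_ne_zero.mpr hgxy.ne'
    have hne1' : y' - x' ≠ 0 := sub_ne_zero.mpr hxy'.ne'
    have hne2' : g a y' - g a x' ≠ 0 := sub_ne_zero.mpr hgxy'.ne'
    have hDeq : derivWithin (g a) I01 ξ = (g a y - g a x) / (y - x) := by
      rw [hξeq]; field_simp
    have hDeq' : derivWithin (g a) I01 ξ' = (g a y' - g a x') / (y' - x') := by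
      rw [hξ'eq]; field_simp
    have hsl : (wordMap g (a :: v) y - wordMap g (a :: v) x) / (y - x)
        = ((wordMap g v (g a y) - wordMap g v (g a x)) / (g a y - g a x))
            * derivWithin (g a) I01 ξ := by
      rw [wordMap_cons, wordMap_cons, hDeq, div_mul_div_comm,
        mul_comm (g a y - g a x) (y - x), mul_div_mul_right _ _ hne2]
    have hsl' : (wordMap g (a :: v) y' - wordMap g (a :: v) x') / (y' - x')
        = ((wordMap g v (g a y') - wordMap g v (g a x')) / (g a y' - g a x'))
            * derivWithin (g a) I01 ξ' := by
      rw [wordMap_cons, wordMap_cons, hDeq', div_mul_div_comm,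
        mul_comm (g a y' - g a x') (y' - x'), mul_div_mul_right _ _ hne2']
    -- positivity
    have hslV'pos : 0 < (wordMap g v (g a y') - wordMap g v (g a x')) / (g a y' - g a x') :=
      div_pos (sub_pos.mpr (wordMap_strictMono hg v hgax' hgay' hgxy')) (sub_pos.mpr hgxy')
    have hDξpos : 0 ≤ derivWithin (g a) I01 ξ := (lt_of_lt_of_le hlam hDξ.1).le
    have hDξ'pos : 0 < derivWithin (g a) I01 ξ' := lt_of_lt_of_le hlam hDξ'.1
    rw [hsl, hsl']
    calc ((wordMap g v (g a y) - wordMap g v (g a x)) / (g a y - g a x))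
          * derivWithin (g a) I01 ξ
        ≤ (Real.exp (C2 * (g a B - g a A) ^ ε)
            * ((wordMap g v (g a y') - wordMap g v (g a x')) / (g a y' - g a x')))
          * (derivWithin (g a) I01 ξ' * Real.exp (H / lam * (B - A) ^ ε)) := by
          apply mul_le_mul hIH hstep hDξpos
          positivity
      _ = (Real.exp (C2 * (g a B - g a A) ^ ε) * Real.exp (H / lam * (B - A) ^ ε))
          * (((wordMap g v (g a y') - wordMap g v (g a x')) / (g a y' - g a x'))
            * derivWithin (g a) I01 ξ') := by ring
      _ ≤ Real.exp (C2 * (B - A) ^ ε)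
          * (((wordMap g v (g a y') - wordMap g v (g a x')) / (g a y' - g a x'))
            * derivWithin (g a) I01 ξ') := by
          apply mul_le_mul_of_nonneg_right hexp
          positivity

end Stmt9Aux
namespace Stmt9Aux

variable {d : ℕ} {ε : ℝ} {g : Fin d → ℝ → ℝ}

/-- Abbreviation for the distortion constant. -/
lemma ratio_close (hg : IsCantorSystem 1 ε g) (hε : ε ∈ Set.Ioc (0:ℝ) 1)
    {lam Lam H : ℝ} (hlam : 0 < lam) (hLam1 : Lam < 1) (hlamLam : lam ≤ Lam) (hH : 0 < H)
    (hb : ∀ i, ∀ x ∈ I01, lam ≤ derivWithin (g i) I01 x ∧ derivWithin (g i) I01 x ≤ Lam)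
    (hhol : ∀ i, ∀ x ∈ I01, ∀ y ∈ I01,
      |derivWithin (g i) I01 x - derivWithin (g i) I01 y| ≤ H * |x - y| ^ ε)
    (v : List (Fin d)) {A B α β : ℝ} (hA : A ∈ I01) (hB : B ∈ I01)
    (hAα : A ≤ α) (hαβ : α < β) (hβB : β ≤ B) :
    |(wordMap g v β - wordMap g v α) / (wordMap g v B - wordMap g v A) - (β - α) / (B - A)|
      ≤ (H / lam / (1 - Lam ^ ε)) * Real.exp (H / lam / (1 - Lam ^ ε)) * (B - A) ^ ε := by
  have hLam0 : 0 < Lam := lt_of_lt_of_le hlam hlamLam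
  have hLamε : Lam ^ ε < 1 := Real.rpow_lt_one hLam0.le hLam1 hε.1
  have hLamε0 : 0 < 1 - Lam ^ ε := by linarith
  set C2 : ℝ := H / lam / (1 - Lam ^ ε) with hC2def
  have hC2 : 0 < C2 := by positivity
  have hAB : A < B := lt_of_le_of_lt hAα (hαβ.trans_le hβB)
  have hα01 : α ∈ I01 := ⟨hA.1.trans hAα, (hαβ.le.trans hβB).trans hB.2⟩
  have hβ01 : β ∈ I01 := ⟨hα01.1.trans hαβ.le, hβB.trans hB.2⟩
  have hBA0 : (0:ℝ) < B - A := by linarith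
  have hBA1 : B - A ≤ 1 := by
    have := hA.1; have := hB.2; linarith
  have hrpBA : (0:ℝ) ≤ (B - A) ^ ε := Real.rpow_nonneg hBA0.le ε
  have hrpBA1 : (B - A) ^ ε ≤ 1 := Real.rpow_le_one hBA0.le hBA1 hε.1.le
  set c : ℝ := C2 * (B - A) ^ ε with hcdef
  have hc0 : 0 ≤ c := by positivity
  have hcC2 : c ≤ C2 := by
    calc c = C2 * (B - A) ^ ε := rfl
      _ ≤ C2 * 1 := mul_le_mul_of_nonneg_left hrpBA1 hC2.le
      _ = C2 := mul_one _
  -- slope inequalities both ways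
  have up := slope_le hg hε hlam hLam1 hlamLam hH hb hhol v hA hB hAα hαβ hβB
    (le_refl A) hAB (le_refl B)
  have down := slope_le hg hε hlam hLam1 hlamLam hH hb hhol v hA hB
    (le_refl A) hAB (le_refl B) hAα hαβ hβB
  set N : ℝ := wordMap g v β - wordMap g v α with hNdef
  set D : ℝ := wordMap g v B - wordMap g v A with hDdef
  have hN : 0 < N := sub_pos.mpr (wordMap_strictMono hg v hα01 hβ01 hαβ)
  have hD : 0 < D := sub_pos.mpr (wordMap_strictMono hg v hA hB hAB)
  have hND : N ≤ D := by
    have h1 := (wordMap_strictMono hg v).monotoneOn hA hα01 hAα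
    have h2 := (wordMap_strictMono hg v).monotoneOn hβ01 hB hβB
    simp only [hNdef, hDdef]; linarith
  have hβα0 : (0:ℝ) < β - α := by linarith
  have hbase1 : (β - α) / (B - A) ≤ 1 := by
    rw [div_le_one hBA0]; linarith
  have hbase0 : 0 < (β - α) / (B - A) := div_pos hβα0 hBA0
  have hone_le : (1:ℝ) ≤ Real.exp c := Real.one_le_exp hc0
  have hup2 : N / D ≤ Real.exp c * ((β - α) / (B - A)) := by
    rw [div_le_iff₀ hD]
    have h := mul_le_mul_of_nonneg_right up hβα0.le
    rw [div_mul_cancel₀ _ hβα0.ne'] at h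
    calc N ≤ Real.exp c * (D / (B - A)) * (β - α) := h
      _ = Real.exp c * ((β - α) / (B - A)) * D := by ring
  have hdown2 : (β - α) / (B - A) ≤ Real.exp c * (N / D) := by
    have h := mul_le_mul_of_nonneg_right down hβα0.le
    rw [mul_assoc, div_mul_cancel₀ _ hβα0.ne'] at h
    calc (β - α) / (B - A) = (D / (B - A) * (β - α)) / D := by
          field_simp
      _ ≤ (Real.exp c * N) / D := by
          apply div_le_div_of_nonneg_right h hD.le
      _ = Real.exp c * (N / D) := by ring
  have hexpc : Real.exp c - 1 ≤ C2 * Real.exp C2 * (B - A) ^ ε := by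
    have k1 : Real.exp c * (1 - c) ≤ 1 := by
      have hk := Real.add_one_le_exp (-c)
      calc Real.exp c * (1 - c) ≤ Real.exp c * Real.exp (-c) := by
            apply mul_le_mul_of_nonneg_left (by linarith) (Real.exp_nonneg c)
        _ = 1 := by rw [← Real.exp_add]; simp
    have k2 : Real.exp c ≤ Real.exp C2 := Real.exp_le_exp.mpr hcC2
    have k3 : Real.exp c - 1 ≤ c * Real.exp c := by nlinarith
    have k4 : c * Real.exp c ≤ c * Real.exp C2 := mul_le_mul_of_nonneg_left k2 hc0
    calc Real.exp c - 1 ≤ c * Real.exp C2 := by linarith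
      _ = C2 * Real.exp C2 * (B - A) ^ ε := by rw [hcdef]; ring
  have hr1 : N / D ≤ 1 := (div_le_one hD).mpr hND
  have hr0 : 0 < N / D := div_pos hN hD
  have e1 : (Real.exp c - 1) * (N / D) = Real.exp c * (N / D) - N / D := by ring
  have e2 : (Real.exp c - 1) * ((β - α) / (B - A))
      = Real.exp c * ((β - α) / (B - A)) - (β - α) / (B - A) := by ring
  have f1 : (Real.exp c - 1) * (N / D) ≤ (Real.exp c - 1) * 1 :=
    mul_le_mul_of_nonneg_left hr1 (by linarith)
  have f2 : (Real.exp c - 1) * ((β - α) / (B - A)) ≤ (Real.exp c - 1) * 1 :=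
    mul_le_mul_of_nonneg_left hbase1 (by linarith)
  rw [abs_le]
  constructor
  · linarith
  · linarith

end Stmt9Aux
namespace Stmt9Aux

variable {d : ℕ} {ε : ℝ} {g : Fin d → ℝ → ℝ}

lemma scalingData_rep (hg : IsCantorSystem 1 ε g) (w : List (Fin d)) (m : Fin (2*d-1)) :
    ∃ a b : ℝ, a ∈ I01 ∧ b ∈ I01 ∧ a < b ∧
      ∀ v, scalingData g (w ++ v) m =
        (wordMap g v (wordMap g w b) - wordMap g v (wordMap g w a)) /
          (wordMap g v (wordMap g w 1) - wordMap g v (wordMap g w 0)) := by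
  have h0 : (0:ℝ) ∈ I01 := by norm_num [I01]
  have h1 : (1:ℝ) ∈ I01 := by norm_num [I01]
  by_cases h : (m : ℕ) < d
  · refine ⟨g ⟨(m : ℕ), h⟩ 0, g ⟨(m : ℕ), h⟩ 1, hg.maps _ h0, hg.maps _ h1,
      branch_strictMono hg _ h0 h1 one_pos, fun v => ?_⟩
    simp only [scalingData, dif_pos h, wordLen, wordMap_cons, wordMap_append]
  · refine ⟨g ⟨(m : ℕ) - d, by have := m.isLt; omega⟩ 1,
      g ⟨(m : ℕ) - d + 1, by have := m.isLt; omega⟩ 0, hg.maps _ h1, hg.maps _ h0,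
      hg.ordered _ _ (by simp [Fin.lt_def]), fun v => ?_⟩
    simp only [scalingData, dif_neg h, wordLen, wordMap_append]

lemma scalingData_mem (hg : IsCantorSystem 1 ε g) (u : List (Fin d)) (m : Fin (2*d-1)) :
    scalingData g u m ∈ Set.Icc (0:ℝ) 1 := by
  have h0 : (0:ℝ) ∈ I01 := by norm_num [I01]
  have h1 : (1:ℝ) ∈ I01 := by norm_num [I01]
  obtain ⟨a, b, ha, hb, hab, hrep⟩ := scalingData_rep hg [] m
  have := hrep u
  simp only [List.nil_append, wordMap, id_eq] at this
  rw [this]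
  have hmono := (wordMap_strictMono hg u).monotoneOn
  have hden : 0 < wordMap g u 1 - wordMap g u 0 :=
    sub_pos.mpr (wordMap_strictMono hg u h0 h1 one_pos)
  constructor
  · exact div_nonneg (sub_nonneg.mpr (hmono ha hb hab.le)) hden.le
  · rw [div_le_one hden]
    have k1 := hmono h0 ha ha.1
    have k2 := hmono hb h1 hb.2
    linarith

lemma scalingData_close (hg : IsCantorSystem 1 ε g) (hε : ε ∈ Set.Ioc (0:ℝ) 1)
    {lam Lam H : ℝ} (hlam : 0 < lam) (hLam1 : Lam < 1) (hlamLam : lam ≤ Lam) (hH : 0 < H)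
    (hb : ∀ i, ∀ x ∈ I01, lam ≤ derivWithin (g i) I01 x ∧ derivWithin (g i) I01 x ≤ Lam)
    (hhol : ∀ i, ∀ x ∈ I01, ∀ y ∈ I01,
      |derivWithin (g i) I01 x - derivWithin (g i) I01 y| ≤ H * |x - y| ^ ε)
    (w v v' : List (Fin d)) (m : Fin (2*d-1)) :
    |scalingData g (w ++ v) m - scalingData g (w ++ v') m|
      ≤ 2 * ((H / lam / (1 - Lam ^ ε)) * Real.exp (H / lam / (1 - Lam ^ ε)))
        * (wordLen g w) ^ ε := by
  have h0 : (0:ℝ) ∈ I01 := by norm_num [I01]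
  have h1 : (1:ℝ) ∈ I01 := by norm_num [I01]
  obtain ⟨a, b, ha, hb', hab, hrep⟩ := scalingData_rep hg w m
  have hA : wordMap g w 0 ∈ I01 := wordMap_mapsTo hg w h0
  have hB : wordMap g w 1 ∈ I01 := wordMap_mapsTo hg w h1
  have hmono := (wordMap_strictMono hg w).monotoneOn
  have hAα : wordMap g w 0 ≤ wordMap g w a := hmono h0 ha ha.1
  have hαβ : wordMap g w a < wordMap g w b := wordMap_strictMono hg w ha hb' hab
  have hβB : wordMap g w b ≤ wordMap g w 1 := hmono hb' h1 hb'.2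
  have c1 := ratio_close hg hε hlam hLam1 hlamLam hH hb hhol v hA hB hAα hαβ hβB
  have c2 := ratio_close hg hε hlam hLam1 hlamLam hH hb hhol v' hA hB hAα hαβ hβB
  rw [hrep v, hrep v']
  have hWL : wordMap g w 1 - wordMap g w 0 = wordLen g w := rfl
  rw [hWL] at c1 c2
  have tri : ∀ X Y Z : ℝ, |X - Y| ≤ |X - Z| + |Y - Z| := by
    intro X Y Z
    rw [abs_sub_comm Y Z]
    exact abs_sub_le X Z Y
  refine le_trans (tri _ _ ((wordMap g w b - wordMap g w a) / wordLen g w)) ?_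
  linarith

end Stmt9Aux
namespace Stmt9Aux

variable {d : ℕ} {ε : ℝ} {g : Fin d → ℝ → ℝ}

lemma dword_split (j : ℕ → Fin d) (a b : ℕ) :
    dword j (a + b) = dword j a ++ dword (fun r => j (a + r)) b := by
  simp only [dword]
  rw [List.ofFn_add]
  congr 1

lemma dword_cons (s : ℕ → Fin d) (n : ℕ) :
    dword s (n + 1) = s 0 :: dword (fun r => s (r + 1)) n := by
  simp only [dword, List.ofFn_succ]
  congr 1

lemma telescope (L : ℕ → ℝ) (hL : ∀ t, L t ≠ 0) : ∀ p : ℕ,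
    ∏ t ∈ Finset.range p, L t / L (t + 1) = L 0 / L p := by
  intro p
  induction p with
  | zero => rw [Finset.prod_range_zero, div_self (hL 0)]
  | succ p ih =>
    rw [Finset.prod_range_succ, ih]
    field_simp [hL p, hL (p+1)]

lemma scaling_factor_eq (j : ℕ → Fin d) (t n : ℕ) :
    scalingData g (dword (fun r => j (t + 1 + r)) n)
        ⟨((j t) : ℕ), by have := (j t).isLt; omega⟩
      = wordLen g (dword (fun r => j (t + r)) (n + 1)) /
        wordLen g (dword (fun r => j (t + 1 + r)) n) := by
  have hlt : ((j t : ℕ)) < d := (j t).isLt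
  have hcons : dword (fun r => j (t + r)) (n + 1)
      = j t :: dword (fun r => j (t + 1 + r)) n := by
    simp only [dword, List.ofFn_succ, Fin.val_succ, Fin.val_zero, Nat.add_zero]
    congr 1
    exact congrArg List.ofFn (funext fun i => congrArg j (by omega))
  simp only [scalingData, dif_pos hlt, Fin.eta, hcons]

end Stmt9Aux
namespace Stmt9Aux

variable {d : ℕ} {ε : ℝ} {g : Fin d → ℝ → ℝ}

lemma prod_eq_telescope (hg : IsCantorSystem 1 ε g) (j : ℕ → Fin d) (p m : ℕ) (hpm : p ≤ m) :
    ∏ t ∈ Finset.range p, scalingData g (dword (fun r => j (t + 1 + r)) (m - t))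
        ⟨((j t) : ℕ), by have := (j t).isLt; omega⟩
      = wordLen g (dword j (m + 1)) / wordLen g (dword (fun r => j (p + r)) (m + 1 - p)) := by
  set L : ℕ → ℝ := fun t => wordLen g (dword (fun r => j (t + r)) (m + 1 - t)) with hL
  have hLne : ∀ t, L t ≠ 0 := fun t => (wordLen_pos hg _).ne'
  have hprod : ∀ t ∈ Finset.range p, scalingData g (dword (fun r => j (t + 1 + r)) (m - t))
      (⟨((j t) : ℕ), by have := (j t).isLt; omega⟩ : Fin (2*d-1)) = L t / L (t + 1) := by
    intro t ht
    have htp : t < p := Finset.mem_range.mp ht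
    have e1 : m - t + 1 = m + 1 - t := by omega
    have e2 : m - t = m + 1 - (t + 1) := by omega
    rw [scaling_factor_eq j t (m - t), hL]
    simp only
    rw [e1, e2]
  rw [Finset.prod_congr rfl hprod, telescope L hLne p]
  have hL0 : L 0 = wordLen g (dword j (m + 1)) := by
    simp only [hL, Nat.sub_zero]
    exact congrArg (fun f => wordLen g (dword f (m + 1)))
      (funext fun r => congrArg j (Nat.zero_add r))
  rw [hL0]

lemma prod_ge (hg : IsCantorSystem 1 ε g) (hε : ε ∈ Set.Ioc (0:ℝ) 1)
    {lam Lam H : ℝ} (hlam : 0 < lam) (hLam1 : Lam < 1) (hlamLam : lam ≤ Lam) (hH : 0 < H)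
    (hb : ∀ i, ∀ x ∈ I01, lam ≤ derivWithin (g i) I01 x ∧ derivWithin (g i) I01 x ≤ Lam)
    (hhol : ∀ i, ∀ x ∈ I01, ∀ y ∈ I01,
      |derivWithin (g i) I01 x - derivWithin (g i) I01 y| ≤ H * |x - y| ^ ε)
    (j : ℕ → Fin d) (p m : ℕ) (hpm : p ≤ m) :
    Real.exp (-(H / lam / (1 - Lam ^ ε))) * wordLen g (dword j p)
      ≤ ∏ t ∈ Finset.range p, scalingData g (dword (fun r => j (t + 1 + r)) (m - t))
          ⟨((j t) : ℕ), by have := (j t).isLt; omega⟩ := by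
  have h0 : (0:ℝ) ∈ I01 := by norm_num [I01]
  have h1 : (1:ℝ) ∈ I01 := by norm_num [I01]
  set C2 : ℝ := H / lam / (1 - Lam ^ ε) with hC2def
  rw [prod_eq_telescope hg j p m hpm]
  set v := dword (fun r => j (p + r)) (m + 1 - p) with hv
  have hsplit : dword j (m + 1) = dword j p ++ v := by
    have e : m + 1 = p + (m + 1 - p) := by omega
    rw [hv, ← dword_split j p (m + 1 - p), ← e]
  set α := wordMap g (dword j p) 0 with hα
  set β := wordMap g (dword j p) 1 with hβ
  have hα01 : α ∈ I01 := wordMap_mapsTo hg _ h0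
  have hβ01 : β ∈ I01 := wordMap_mapsTo hg _ h1
  have hαβ : α < β := wordMap_strictMono hg _ h0 h1 one_pos
  have hLnum : wordLen g (dword j (m + 1)) = wordMap g v β - wordMap g v α := by
    rw [hsplit]
    unfold wordLen
    rw [wordMap_append, wordMap_append]
  have up := slope_le hg hε hlam hLam1 hlamLam hH hb hhol v h0 h1
    (le_refl (0:ℝ)) one_pos (le_refl (1:ℝ)) hα01.1 hαβ hβ01.2
  simp only [sub_zero, div_one, Real.one_rpow, mul_one] at up
  -- up : wordMap g v 1 - wordMap g v 0 ≤ exp C2 * ((wordMap g v β - wordMap g v α)/(β - α))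
  have hLv : 0 < wordLen g v := wordLen_pos hg v
  have hβα : 0 < β - α := sub_pos.mpr hαβ
  rw [hLnum, le_div_iff₀ hLv]
  have h3 := mul_le_mul_of_nonneg_left up
    (mul_nonneg (Real.exp_nonneg (-C2)) hβα.le)
  calc Real.exp (-C2) * wordLen g (dword j p) * wordLen g v
      = Real.exp (-C2) * (β - α) * (wordMap g v 1 - wordMap g v 0) := rfl
    _ ≤ Real.exp (-C2) * (β - α)
        * (Real.exp C2 * ((wordMap g v β - wordMap g v α) / (β - α))) := h3
    _ = (Real.exp (-C2) * Real.exp C2)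
        * ((β - α) * ((wordMap g v β - wordMap g v α) / (β - α))) := by ring
    _ = wordMap g v β - wordMap g v α := by
        rw [← Real.exp_add, neg_add_cancel, Real.exp_zero, one_mul,
          mul_div_cancel₀ _ hβα.ne']

end Stmt9Aux
/-- Theorem 1, necessity: the scaling function of a `C^{1+ε}` Cantor system is
`C^ε` with respect to the metric `ρ_S`: `|S(j) - S(j')|_∞ ≤ K ρ_S(j,j')^ε`. -/
theorem stmt9 (d : ℕ) (hd : 2 ≤ d) (ε : ℝ) (hε : ε ∈ Set.Ioc (0:ℝ) 1)
    (g : Fin d → ℝ → ℝ) (hg : IsCantorSystem 1 ε g)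
    (S : (ℕ → Fin d) → Fin (2*d-1) → ℝ) (hS : HasScalingFunction g S) :
    ∃ K > 0, ∀ j j' : ℕ → Fin d, ∀ p : ℕ,
      (∀ t < p, j t = j' t) → j p ≠ j' p →
      ∀ m, |S j m - S j' m| ≤ K * rhoS S j p ^ ε := by
  classical
  obtain ⟨lam, Lam, H, hlam, hlamLam, hLam1, hH, hb, hhol⟩ := Stmt9Aux.exists_bounds hg hd
  have hLam0 : 0 < Lam := lt_of_lt_of_le hlam hlamLam
  have hLamε : Lam ^ ε < 1 := Real.rpow_lt_one hLam0.le hLam1 hε.1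
  have hLamε0 : 0 < 1 - Lam ^ ε := by linarith
  set C2 : ℝ := H / lam / (1 - Lam ^ ε) with hC2def
  have hC2 : 0 < C2 := by positivity
  refine ⟨2 * (C2 * Real.exp C2) * Real.exp C2, by positivity, ?_⟩
  intro j j' p hagree hne m
  have hSmem : ∀ (jj : ℕ → Fin d) (mm : Fin (2*d-1)), S jj mm ∈ Set.Icc (0:ℝ) 1 := by
    intro jj mm
    apply isClosed_Icc.mem_of_tendsto (tendsto_pi_nhds.mp (hS jj) mm)
    exact Filter.Eventually.of_forall fun n => Stmt9Aux.scalingData_mem hg _ mm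
  set Bp := wordLen g (dword j p) with hBp
  have hBp0 : 0 < Bp := Stmt9Aux.wordLen_pos hg _
  -- Step 1 : Hölder bound in terms of |I_{j|p}|
  have step1 : |S j m - S j' m| ≤ 2 * (C2 * Real.exp C2) * Bp ^ ε := by
    have htend : Filter.Tendsto
        (fun n => |scalingData g (dword j n) m - scalingData g (dword j' n) m|)
        Filter.atTop (nhds |S j m - S j' m|) :=
      ((tendsto_pi_nhds.mp (hS j) m).sub (tendsto_pi_nhds.mp (hS j') m)).abs
    apply le_of_tendsto htend
    filter_upwards [Filter.eventually_ge_atTop p] with n hn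
    have hjp : dword j' p = dword j p := by
      simp only [dword]
      exact congrArg List.ofFn (funext fun i => (hagree i i.isLt).symm)
    have hsplit : dword j n = dword j p ++ dword (fun r => j (p + r)) (n - p) := by
      have e : n = p + (n - p) := by omega
      rw [← Stmt9Aux.dword_split j p (n - p), ← e]
    have hsplit' : dword j' n = dword j p ++ dword (fun r => j' (p + r)) (n - p) := by
      have e : n = p + (n - p) := by omega
      rw [← hjp, ← Stmt9Aux.dword_split j' p (n - p), ← e]
    rw [hsplit, hsplit']
    exact Stmt9Aux.scalingData_close hg hε hlam hLam1 hlamLam hH hb hhol _ _ _ m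
  -- Step 2 : compare Bp with rhoS
  set PP : ℝ := ∏ t ∈ Finset.range p,
      S (fun r => j (t + 1 + r)) ⟨((j t) : ℕ), by have := (j t).isLt; omega⟩ with hPP
  have hPPtend : Filter.Tendsto (fun mm => ∏ t ∈ Finset.range p,
      scalingData g (dword (fun r => j (t + 1 + r)) (mm - t))
        ⟨((j t) : ℕ), by have := (j t).isLt; omega⟩) Filter.atTop (nhds PP) := by
    rw [hPP]
    exact tendsto_finset_prod _ (fun t _ =>
      (tendsto_pi_nhds.mp (hS (fun r => j (t + 1 + r))) _).comp (tendsto_sub_atTop_nat t))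
  have hPPge : Real.exp (-C2) * Bp ≤ PP := by
    apply ge_of_tendsto hPPtend
    filter_upwards [Filter.eventually_ge_atTop p] with mm hmm
    exact Stmt9Aux.prod_ge hg hε hlam hLam1 hlamLam hH hb hhol j p mm hmm
  have hPPle : PP ≤ rhoS S j p := by
    have hbdd : BddAbove (Set.range fun w : ℕ → Fin d => ∏ t ∈ Finset.range p,
        S (fun m_1 => if t + 1 + m_1 < p then j (t + 1 + m_1) else w (t + 1 + m_1 - p))
          ⟨((j t) : ℕ), by have := (j t).isLt; omega⟩) := by
      refine ⟨1, ?_⟩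
      rintro x ⟨w, rfl⟩
      apply Finset.prod_le_one
      · intro t _; exact (hSmem _ _).1
      · intro t _; exact (hSmem _ _).2
    have hkey : (∏ t ∈ Finset.range p,
        S (fun m_1 => if t + 1 + m_1 < p then j (t + 1 + m_1)
            else (fun r => j (p + r)) (t + 1 + m_1 - p))
          (⟨((j t) : ℕ), by have := (j t).isLt; omega⟩ : Fin (2*d-1))) = PP := by
      rw [hPP]
      apply Finset.prod_congr rfl
      intro t ht
      congr 1
      funext r
      by_cases hc : t + 1 + r < p
      · simp only [if_pos hc]
      · simp only [if_neg hc]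
        exact congrArg j (by omega)
    have hle := le_ciSup hbdd (fun r => j (p + r))
    rw [rhoS]
    exact le_trans (le_of_eq hkey.symm) hle
  have hρ0 : 0 < rhoS S j p :=
    lt_of_lt_of_le (by positivity) (le_trans hPPge hPPle)
  have hBple : Bp ≤ Real.exp C2 * rhoS S j p := by
    have h1 := le_trans hPPge hPPle
    have h2 := mul_le_mul_of_nonneg_left h1 (Real.exp_nonneg C2)
    calc Bp = Real.exp C2 * (Real.exp (-C2) * Bp) := by
          rw [← mul_assoc, ← Real.exp_add, add_neg_cancel, Real.exp_zero, one_mul]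
      _ ≤ Real.exp C2 * rhoS S j p := h2
  have hrpow : Bp ^ ε ≤ Real.exp C2 * rhoS S j p ^ ε := by
    calc Bp ^ ε ≤ (Real.exp C2 * rhoS S j p) ^ ε :=
        Real.rpow_le_rpow hBp0.le hBple hε.1.le
      _ = (Real.exp C2) ^ ε * rhoS S j p ^ ε :=
        Real.mul_rpow (Real.exp_nonneg _) hρ0.le
      _ ≤ Real.exp C2 * rhoS S j p ^ ε := by
          apply mul_le_mul_of_nonneg_right _ (Real.rpow_nonneg hρ0.le ε)
          calc (Real.exp C2) ^ ε = Real.exp (C2 * ε) := (Real.exp_mul C2 ε).symm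
            _ ≤ Real.exp C2 := Real.exp_le_exp.mpr (by nlinarith [hε.2, hε.1, hC2])
  calc |S j m - S j' m| ≤ 2 * (C2 * Real.exp C2) * Bp ^ ε := step1
    _ ≤ 2 * (C2 * Real.exp C2) * (Real.exp C2 * rhoS S j p ^ ε) :=
        mul_le_mul_of_nonneg_left hrpow (by positivity)
    _ = 2 * (C2 * Real.exp C2) * Real.exp C2 * rhoS S j p ^ ε := by ring
end
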